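/- For n ≥ 3, the diameter of the orthogonality graph O(T_n) of n×n upper triangular matrices over any field F is exactly 4: any two vertices are joined by a path of length at most 4, and there exist vertices at distance exactly 4. -/

import Mathlib

open Matrix

/-- The orthogonality graph of the algebra of upper triangular `n × n` matrices
over `F`: vertices are the nonzero singular (equivalently, two-sided zero
divisor) upper triangular matrices, with an edge between distinct `A`, `B` iff
`A * B = B * A = 0`. -/
def orthoGraph (F : Type*) [Field F] (n : ℕ) :
    SimpleGraph {A : Matrix (Fin n) (Fin n) F // A.BlockTriangular id ∧ A ≠ 0 ∧ A.det = 0} where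
  Adj X Y := X ≠ Y ∧ X.1 * Y.1 = 0 ∧ Y.1 * X.1 = 0
  symm := ⟨fun X Y h => ⟨h.1.symm, h.2.2, h.2.1⟩⟩
  loopless := ⟨fun X h => h.1 rfl⟩


namespace OrthoAux

abbrev Vx (F : Type*) [Field F] (n : ℕ) :=
  {A : Matrix (Fin n) (Fin n) F // A.BlockTriangular id ∧ A ≠ 0 ∧ A.det = 0}


variable {F : Type*} [Field F] {n : ℕ}

lemma mul_vmv (M : Matrix (Fin n) (Fin n) F) (v w : Fin n → F) :
    M * vecMulVec v w = vecMulVec (M *ᵥ v) w := by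
  ext i j
  simp [vecMulVec_apply, mul_apply, mulVec, dotProduct, Finset.sum_mul, mul_assoc]

lemma vmv_mul (v w : Fin n → F) (M : Matrix (Fin n) (Fin n) F) :
    vecMulVec v w * M = vecMulVec v (w ᵥ* M) := by
  ext i j
  simp [vecMulVec_apply, mul_apply, vecMul, dotProduct, Finset.mul_sum, mul_assoc]

lemma vmv_mul_vmv (v w v' w' : Fin n → F) :
    vecMulVec v w * vecMulVec v' w' = (w ⬝ᵥ v') • vecMulVec v w' := by
  ext i j
  simp only [mul_apply, vecMulVec_apply, Matrix.smul_apply, dotProduct, smul_eq_mul, Finset.sum_mul,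
    Finset.mul_sum]
  rw [Finset.sum_congr rfl]
  intro k _
  ring

lemma vmv_ne_zero {v w : Fin n → F} (hv : v ≠ 0) (hw : w ≠ 0) : vecMulVec v w ≠ 0 := by
  obtain ⟨i, hi⟩ := Function.ne_iff.mp hv
  obtain ⟨j, hj⟩ := Function.ne_iff.mp hw
  intro h
  have := congrFun (congrFun h i) j
  simp only [vecMulVec_apply, Matrix.zero_apply] at this
  exact (mul_ne_zero hi hj) this

lemma vmv_triangular {v w : Fin n → F} (m : Fin n)
    (hv : ∀ i, m < i → v i = 0) (hw : ∀ j, j < m → w j = 0) :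
    (vecMulVec v w).BlockTriangular id := by
  intro i j hij
  simp only [id] at hij
  by_cases him : m < i
  · simp [vecMulVec_apply, hv i him]
  · have : j < m := lt_of_lt_of_le hij (not_lt.mp him)
    simp [vecMulVec_apply, hw j this]

lemma vmv_det (hn : 2 ≤ n) {v w : Fin n → F} (m : Fin n)
    (hv : ∀ i, m < i → v i = 0) (hw : ∀ j, j < m → w j = 0) :
    (vecMulVec v w).det = 0 := by
  rw [det_of_upperTriangular (vmv_triangular m hv hw)]
  by_cases hm : m.val = n - 1
  · apply Finset.prod_eq_zero (Finset.mem_univ (⟨0, by omega⟩ : Fin n))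
    have h0 : (⟨0, by omega⟩ : Fin n) < m := by
      simp [Fin.lt_def]; omega
    simp [vecMulVec_apply, hw _ h0]
  · apply Finset.prod_eq_zero (Finset.mem_univ (⟨n - 1, by omega⟩ : Fin n))
    have h1 : m < (⟨n - 1, by omega⟩ : Fin n) := by
      rw [Fin.lt_def]; simp; omega
    simp [vecMulVec_apply, hv _ h1]


lemma exists_right_kernel {A : Matrix (Fin n) (Fin n) F} (hA : A.BlockTriangular id)
    {k : Fin n} (hk : A k k = 0) :
    ∃ v : Fin n → F, v ≠ 0 ∧ A *ᵥ v = 0 ∧ ∀ i, k < i → v i = 0 := by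
  set At : Matrix (Fin n) (Fin n) F :=
    Matrix.of (fun i j => if i ≤ k ∧ j ≤ k then A i j else
      if i = j then 1 else 0) with hAt
  have htri : At.BlockTriangular id := by
    intro i j hij
    simp only [id] at hij
    by_cases h : i ≤ k ∧ j ≤ k
    · simpa [hAt, h] using hA hij
    · simp [hAt, h, hij.ne']
  have hdet : At.det = 0 := by
    rw [det_of_upperTriangular htri]
    apply Finset.prod_eq_zero (Finset.mem_univ k)
    simp [hAt, hk]
  obtain ⟨v, hv0, hv⟩ := (Matrix.exists_mulVec_eq_zero_iff).mpr hdet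
  have hsupp : ∀ i, k < i → v i = 0 := by
    intro i hi
    have h0 := congrFun hv i
    have hik : ¬ i ≤ k := not_le.mpr hi
    simp only [mulVec, dotProduct, Pi.zero_apply, hAt, Matrix.of_apply, hik, false_and,
      if_false, ite_mul, one_mul, zero_mul] at h0
    rwa [Finset.sum_ite_eq (Finset.univ : Finset (Fin n)) i v, if_pos (Finset.mem_univ i)] at h0
  refine ⟨v, hv0, ?_, hsupp⟩
  funext i
  by_cases hik : i ≤ k
  · have h0 := congrFun hv i
    simp only [mulVec, dotProduct, Pi.zero_apply] at h0 ⊢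
    rw [← h0]
    apply Finset.sum_congr rfl
    intro j _
    by_cases hjk : j ≤ k
    · simp [hAt, hik, hjk]
    · have : v j = 0 := hsupp j (not_le.mp hjk)
      simp [this]
  · simp only [mulVec, dotProduct, Pi.zero_apply]
    apply Finset.sum_eq_zero
    intro j _
    by_cases hjk : j ≤ k
    · have : A i j = 0 := hA (lt_of_le_of_lt hjk (not_le.mp hik))
      simp [this]
    · have : v j = 0 := hsupp j (not_le.mp hjk)
      simp [this]

lemma exists_left_kernel {A : Matrix (Fin n) (Fin n) F} (hA : A.BlockTriangular id)
    {k : Fin n} (hk : A k k = 0) :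
    ∃ w : Fin n → F, w ≠ 0 ∧ w ᵥ* A = 0 ∧ ∀ j, j < k → w j = 0 := by
  set At : Matrix (Fin n) (Fin n) F :=
    Matrix.of (fun i j => if k ≤ i ∧ k ≤ j then A i j else
      if i = j then 1 else 0) with hAt
  have htri : At.BlockTriangular id := by
    intro i j hij
    simp only [id] at hij
    by_cases h : k ≤ i ∧ k ≤ j
    · simpa [hAt, h] using hA hij
    · simp [hAt, h, hij.ne']
  have hdet : At.det = 0 := by
    rw [det_of_upperTriangular htri]
    apply Finset.prod_eq_zero (Finset.mem_univ k)
    simp [hAt, hk]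
  obtain ⟨w, hw0, hw⟩ := (Matrix.exists_vecMul_eq_zero_iff).mpr hdet
  have hsupp : ∀ j, j < k → w j = 0 := by
    intro j hj
    have h0 := congrFun hw j
    have hjk : ¬ k ≤ j := not_le.mpr hj
    simp only [vecMul, dotProduct, Pi.zero_apply, hAt, Matrix.of_apply, hjk, and_false,
      if_false, mul_ite, mul_one, mul_zero] at h0
    rwa [Finset.sum_ite_eq' (Finset.univ : Finset (Fin n)) j w, if_pos (Finset.mem_univ j)] at h0
  refine ⟨w, hw0, ?_, hsupp⟩
  funext j
  by_cases hjk : k ≤ j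
  · have h0 := congrFun hw j
    simp only [vecMul, dotProduct, Pi.zero_apply] at h0 ⊢
    rw [← h0]
    apply Finset.sum_congr rfl
    intro i _
    by_cases hik : k ≤ i
    · simp [hAt, hik, hjk]
    · have : w i = 0 := hsupp i (not_le.mp hik)
      simp [this]
  · simp only [vecMul, dotProduct, Pi.zero_apply]
    apply Finset.sum_eq_zero
    intro i _
    by_cases hik : k ≤ i
    · have : A i j = 0 := hA (lt_of_lt_of_le (not_le.mp hjk) hik)
      simp [this]
    · have : w i = 0 := hsupp i (not_le.mp hik)
      simp [this]


lemma exists_dot1 (c : Fin n → F) {i j : Fin n} (hij : i ≠ j) :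
    ∃ u : Fin n → F, u ≠ 0 ∧ c ⬝ᵥ u = 0 ∧ ∀ m, m ≠ i → m ≠ j → u m = 0 := by
  by_cases hc : c i = 0
  · refine ⟨Pi.single i 1, ?_, ?_, ?_⟩
    · intro h
      have := congrFun h i
      simp at this
    · rw [dotProduct_single, hc, zero_mul]
    · intro m hmi _
      exact Pi.single_eq_of_ne hmi 1
  · refine ⟨Pi.single i (c j) + Pi.single j (-(c i)), ?_, ?_, ?_⟩
    · intro h
      have := congrFun h j
      simp [Pi.single_eq_of_ne (Ne.symm hij)] at this
      exact hc this
    · simp only [dotProduct_add, dotProduct_single]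
      ring
    · intro m hmi hmj
      simp [Pi.single_eq_of_ne hmi, Pi.single_eq_of_ne hmj]

lemma exists_dot2 (hn : 3 ≤ n) (c d : Fin n → F) :
    ∃ u : Fin n → F, u ≠ 0 ∧ c ⬝ᵥ u = 0 ∧ d ⬝ᵥ u = 0 := by
  let f : (Fin n → F) →ₗ[F] (Fin 2 → F) := (Matrix.of ![c, d]).mulVecLin
  have hker : LinearMap.ker f ≠ ⊥ := by
    apply LinearMap.ker_ne_bot_of_finrank_lt
    simp only [Module.finrank_fintype_fun_eq_card, Fintype.card_fin]
    omega
  obtain ⟨u, hu, hu0⟩ := Submodule.ne_bot_iff _ |>.mp hker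
  have h0 : (Matrix.of ![c, d]) *ᵥ u = 0 := hu
  refine ⟨u, hu0, ?_, ?_⟩
  · have := congrFun h0 0
    simpa [mulVec, dotProduct] using this
  · have := congrFun h0 1
    simpa [mulVec, dotProduct] using this


lemma rankOne_mem (hn : 2 ≤ n) (m : Fin n) {u z : Fin n → F} (hu0 : u ≠ 0) (hz0 : z ≠ 0)
    (hu : ∀ i, m < i → u i = 0) (hz : ∀ j, j < m → z j = 0) :
    (vecMulVec u z).BlockTriangular id ∧ vecMulVec u z ≠ 0 ∧ (vecMulVec u z).det = 0 :=
  ⟨vmv_triangular m hu hz, vmv_ne_zero hu0 hz0, vmv_det hn m hu hz⟩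

lemma orthoGraph_adj {X Y : Vx F n} :
    (orthoGraph F n).Adj X Y ↔ X ≠ Y ∧ X.1 * Y.1 = 0 ∧ Y.1 * X.1 = 0 := Iff.rfl

lemma edist_le_one_of {X Y : Vx F n} (h1 : X.1 * Y.1 = 0) (h2 : Y.1 * X.1 = 0) :
    (orthoGraph F n).edist X Y ≤ 1 := by
  by_cases h : X = Y
  · subst h; rw [SimpleGraph.edist_self]; exact zero_le_one
  · exact le_of_eq (SimpleGraph.edist_eq_one_iff_adj.mpr (orthoGraph_adj.mpr ⟨h, h1, h2⟩))

lemma exists_P (X : Vx F n) :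
    ∃ (k : Fin n) (v w : Fin n → F), v ≠ 0 ∧ w ≠ 0 ∧
      (∀ i, k < i → v i = 0) ∧ (∀ j, j < k → w j = 0) ∧
      X.1 *ᵥ v = 0 ∧ w ᵥ* X.1 = 0 := by
  obtain ⟨hTri, hNe, hDet⟩ := X.2
  rw [det_of_upperTriangular hTri] at hDet
  obtain ⟨k, -, hk⟩ := Finset.prod_eq_zero_iff.mp hDet
  obtain ⟨v, hv0, hAv, hv⟩ := exists_right_kernel hTri hk
  obtain ⟨w, hw0, hwA, hw⟩ := exists_left_kernel hTri hk
  exact ⟨k, v, w, hv0, hw0, hv, hw, hAv, hwA⟩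

lemma exists_middle (hn : 3 ≤ n) (k k' : Fin n) (v w v' w' : Fin n → F)
    (hv : ∀ i, k < i → v i = 0) (hw : ∀ j, j < k → w j = 0)
    (hv' : ∀ i, k' < i → v' i = 0) (hw' : ∀ j, j < k' → w' j = 0) :
    ∃ (m : Fin n) (u z : Fin n → F), u ≠ 0 ∧ z ≠ 0 ∧
      (∀ i, m < i → u i = 0) ∧ (∀ j, j < m → z j = 0) ∧
      w ⬝ᵥ u = 0 ∧ w' ⬝ᵥ u = 0 ∧ z ⬝ᵥ v = 0 ∧ z ⬝ᵥ v' = 0 := by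
  have h0n : 0 < n := by omega
  set i0 : Fin n := ⟨0, by omega⟩ with hi0
  set i1 : Fin n := ⟨1, by omega⟩ with hi1
  set lst : Fin n := ⟨n - 1, by omega⟩ with hlst
  have h01 : i0 ≠ i1 := by simp [hi0, hi1, Fin.ext_iff]
  have h1l : i1 ≠ lst := by simp [hi1, hlst, Fin.ext_iff]; omega
  have h0l : i0 ≠ lst := by simp [hi0, hlst, Fin.ext_iff]; omega
  have hsingle0 : (Pi.single i0 1 : Fin n → F) ≠ 0 := by
    intro h; have := congrFun h i0; simp at this
  have hsinglel : (Pi.single lst 1 : Fin n → F) ≠ 0 := by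
    intro h; have := congrFun h lst; simp at this
  by_cases hk : k ≠ i0 ∧ k' ≠ i0
  · -- both k, k' positive : m = 0, u = e₀
    obtain ⟨z, hz0, hzv, hzv'⟩ := exists_dot2 hn v v'
    have h0k : i0 < k := lt_of_le_of_ne (by simp [hi0, Fin.le_def]) (Ne.symm hk.1)
    have h0k' : i0 < k' := lt_of_le_of_ne (by simp [hi0, Fin.le_def]) (Ne.symm hk.2)
    refine ⟨i0, Pi.single i0 1, z, hsingle0, hz0, ?_, ?_, ?_, ?_, ?_, ?_⟩
    · intro i hi; exact Pi.single_eq_of_ne hi.ne' 1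
    · intro j hj; exact absurd hj (by simp [hi0, Fin.lt_def])
    · rw [dotProduct_single, hw i0 h0k, zero_mul]
    · rw [dotProduct_single, hw' i0 h0k', zero_mul]
    · rw [dotProduct_comm]; exact hzv
    · rw [dotProduct_comm]; exact hzv'
  · by_cases hk2 : k ≠ lst ∧ k' ≠ lst
    · -- both k, k' below last : m = lst, z = e_lst
      obtain ⟨u, hu0, hwu, hw'u⟩ := exists_dot2 hn w w'
      have hkl : k < lst := lt_of_le_of_ne (by simp [hlst, Fin.le_def]; omega) hk2.1
      have hkl' : k' < lst := lt_of_le_of_ne (by simp [hlst, Fin.le_def]; omega) hk2.2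
      refine ⟨lst, u, Pi.single lst 1, hu0, hsinglel, ?_, ?_, hwu, hw'u, ?_, ?_⟩
      · intro i hi
        exact absurd hi (by simp [hlst, Fin.lt_def]; omega)
      · intro j hj; exact Pi.single_eq_of_ne hj.ne 1
      · rw [single_dotProduct, hv lst hkl, mul_zero]
      · rw [single_dotProduct, hv' lst hkl', mul_zero]
    · -- mixed extreme case
      push_neg at hk hk2
      have h01lt : i0 < i1 := by simp [hi0, hi1, Fin.lt_def]
      have h1llt : i1 < lst := by simp [hi1, hlst, Fin.lt_def]; omega
      have h0llt : i0 < lst := by simp [hi0, hlst, Fin.lt_def]; omega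
      have hcase : (k = i0 ∧ k' = lst) ∨ (k' = i0 ∧ k = lst) := by
        by_cases h : k = i0
        · exact Or.inl ⟨h, hk2 (by rw [h]; exact h0l)⟩
        · have hk'0 := hk h
          refine Or.inr ⟨hk'0, ?_⟩
          by_contra hkl
          have := hk2 hkl
          rw [hk'0] at this
          exact h0l this
      rcases hcase with ⟨hka, hkb⟩ | ⟨hka, hkb⟩
      · obtain ⟨u, hu0, hwu, husupp⟩ := exists_dot1 w h01
        obtain ⟨z, hz0, hv'z, hzsupp⟩ := exists_dot1 v' h1l
        refine ⟨i1, u, z, hu0, hz0, ?_, ?_, hwu, ?_, ?_, ?_⟩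
        · intro i hi
          exact husupp i (h01lt.trans hi).ne' hi.ne'
        · intro j hj
          exact hzsupp j hj.ne (hj.trans h1llt).ne
        · apply Finset.sum_eq_zero
          intro t _
          by_cases ht : t = i0 ∨ t = i1
          · have : w' t = 0 := by
              apply hw' t
              rw [hkb]
              rcases ht with h | h <;> rw [h]
              · exact h0llt
              · exact h1llt
            rw [this, zero_mul]
          · push_neg at ht
            rw [husupp t ht.1 ht.2, mul_zero]
        · apply Finset.sum_eq_zero
          intro t _
          by_cases ht : t = i0
          · rw [hzsupp t (by rw [ht]; exact h01) (by rw [ht]; exact h0l), zero_mul]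
          · have : v t = 0 := by
              apply hv t
              rw [hka]
              exact lt_of_le_of_ne (by simp [hi0, Fin.le_def]) (Ne.symm ht)
            rw [this, mul_zero]
        · rw [dotProduct_comm]; exact hv'z
      · obtain ⟨u, hu0, hw'u, husupp⟩ := exists_dot1 w' h01
        obtain ⟨z, hz0, hvz, hzsupp⟩ := exists_dot1 v h1l
        refine ⟨i1, u, z, hu0, hz0, ?_, ?_, ?_, hw'u, ?_, ?_⟩
        · intro i hi
          exact husupp i (h01lt.trans hi).ne' hi.ne'
        · intro j hj
          exact hzsupp j hj.ne (hj.trans h1llt).ne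
        · apply Finset.sum_eq_zero
          intro t _
          by_cases ht : t = i0 ∨ t = i1
          · have : w t = 0 := by
              apply hw t
              rw [hkb]
              rcases ht with h | h <;> rw [h]
              · exact h0llt
              · exact h1llt
            rw [this, zero_mul]
          · push_neg at ht
            rw [husupp t ht.1 ht.2, mul_zero]
        · rw [dotProduct_comm]; exact hvz
        · apply Finset.sum_eq_zero
          intro t _
          by_cases ht : t = i0
          · rw [hzsupp t (by rw [ht]; exact h01) (by rw [ht]; exact h0l), zero_mul]
          · have : v' t = 0 := by
              apply hv' t
              rw [hka]
              exact lt_of_le_of_ne (by simp [hi0, Fin.le_def]) (Ne.symm ht)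
            rw [this, mul_zero]

lemma vmv_zero_left (w : Fin n → F) : vecMulVec (0 : Fin n → F) w = 0 := by
  ext i j; simp [vecMulVec_apply]

lemma vmv_zero_right (v : Fin n → F) : vecMulVec v (0 : Fin n → F) = 0 := by
  ext i j; simp [vecMulVec_apply]

lemma ediam_le_four (hn : 3 ≤ n) : (orthoGraph F n).ediam ≤ 4 := by
  apply SimpleGraph.ediam_le_of_edist_le
  intro X Y
  obtain ⟨k, v, w, hv0, hw0, hv, hw, hAv, hwA⟩ := exists_P X
  obtain ⟨k', v', w', hv'0, hw'0, hv', hw', hAv', hw'A⟩ := exists_P Y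
  obtain ⟨m, u, z, hu0, hz0, hu, hz, hwu, hw'u, hzv, hzv'⟩ :=
    exists_middle hn k k' v w v' w' hv hw hv' hw'
  have h2 : (2:ℕ) ≤ n := by omega
  set PX : Vx F n := ⟨vecMulVec v w, rankOne_mem h2 k hv0 hw0 hv hw⟩ with hPX
  set PY : Vx F n := ⟨vecMulVec v' w', rankOne_mem h2 k' hv'0 hw'0 hv' hw'⟩ with hPY
  set M : Vx F n := ⟨vecMulVec u z, rankOne_mem h2 m hu0 hz0 hu hz⟩ with hM
  have e1 : (orthoGraph F n).edist X PX ≤ 1 := by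
    apply edist_le_one_of
    · show X.1 * vecMulVec v w = 0
      rw [mul_vmv, hAv, vmv_zero_left]
    · show vecMulVec v w * X.1 = 0
      rw [vmv_mul, hwA, vmv_zero_right]
  have e2 : (orthoGraph F n).edist PX M ≤ 1 := by
    apply edist_le_one_of
    · show vecMulVec v w * vecMulVec u z = 0
      rw [vmv_mul_vmv, hwu, zero_smul]
    · show vecMulVec u z * vecMulVec v w = 0
      rw [vmv_mul_vmv, hzv, zero_smul]
  have e3 : (orthoGraph F n).edist M PY ≤ 1 := by
    apply edist_le_one_of
    · show vecMulVec u z * vecMulVec v' w' = 0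
      rw [vmv_mul_vmv, hzv', zero_smul]
    · show vecMulVec v' w' * vecMulVec u z = 0
      rw [vmv_mul_vmv, hw'u, zero_smul]
  have e4 : (orthoGraph F n).edist PY Y ≤ 1 := by
    apply edist_le_one_of
    · show vecMulVec v' w' * Y.1 = 0
      rw [vmv_mul, hw'A, vmv_zero_right]
    · show Y.1 * vecMulVec v' w' = 0
      rw [mul_vmv, hAv', vmv_zero_left]
  calc (orthoGraph F n).edist X Y
      ≤ (orthoGraph F n).edist X PX + (orthoGraph F n).edist PX Y :=
        SimpleGraph.edist_triangle
    _ ≤ (orthoGraph F n).edist X PX +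
        ((orthoGraph F n).edist PX M + (orthoGraph F n).edist M Y) :=
        add_le_add_right SimpleGraph.edist_triangle _
    _ ≤ (orthoGraph F n).edist X PX +
        ((orthoGraph F n).edist PX M +
          ((orthoGraph F n).edist M PY + (orthoGraph F n).edist PY Y)) := by
        exact add_le_add_right (add_le_add_right SimpleGraph.edist_triangle _) _
    _ ≤ 1 + (1 + (1 + 1)) := by
        exact add_le_add e1 (add_le_add e2 (add_le_add e3 e4))
    _ = 4 := by norm_num

section Lower

variable (F n) in
def Amat : Matrix (Fin n) (Fin n) F :=
  Matrix.of (fun i j => if i = j ∧ i.val ≠ 0 then 1 else 0)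

variable (F n) in
def Bmat : Matrix (Fin n) (Fin n) F :=
  Matrix.of (fun i j => if i = j ∧ j.val ≠ n - 1 then 1 else
    if i.val = 0 ∧ j.val = n - 1 then 1 else 0)

lemma Amat_apply (i j : Fin n) :
    Amat F n i j = if i = j ∧ i.val ≠ 0 then 1 else 0 := rfl

lemma Bmat_apply (i j : Fin n) :
    Bmat F n i j = if i = j ∧ j.val ≠ n - 1 then 1 else
      if i.val = 0 ∧ j.val = n - 1 then 1 else 0 := rfl

lemma Amat_mem (hn : 3 ≤ n) :
    (Amat F n).BlockTriangular id ∧ Amat F n ≠ 0 ∧ (Amat F n).det = 0 := by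
  refine ⟨?_, ?_, ?_⟩
  · intro i j hij
    simp only [id] at hij
    simp [Amat_apply, hij.ne']
  · intro h
    have := congrFun (congrFun h ⟨1, by omega⟩) ⟨1, by omega⟩
    simp [Amat_apply] at this
  · rw [det_of_upperTriangular (by
      intro i j hij
      simp only [id] at hij
      simp [Amat_apply, hij.ne'])]
    apply Finset.prod_eq_zero (Finset.mem_univ (⟨0, by omega⟩ : Fin n))
    simp [Amat_apply]

lemma Bmat_mem (hn : 3 ≤ n) :
    (Bmat F n).BlockTriangular id ∧ Bmat F n ≠ 0 ∧ (Bmat F n).det = 0 := by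
  have htri : (Bmat F n).BlockTriangular id := by
    intro i j hij
    simp only [id] at hij
    have h1 : i ≠ j := hij.ne'
    have h2 : ¬(i.val = 0 ∧ j.val = n - 1) := by
      rintro ⟨h0, hl⟩
      have := Fin.lt_iff_val_lt_val.mp hij
      omega
    simp [Bmat_apply, h1, h2]
  refine ⟨htri, ?_, ?_⟩
  · intro h
    have h0l : (0:ℕ) ≠ n - 1 := by omega
    have := congrFun (congrFun h ⟨0, by omega⟩) ⟨0, by omega⟩
    simp [Bmat_apply, h0l] at this
  · rw [det_of_upperTriangular htri]
    apply Finset.prod_eq_zero (Finset.mem_univ (⟨n - 1, by omega⟩ : Fin n))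
    simp [Bmat_apply]
    omega

lemma clsA (hn : 3 ≤ n) {X : Matrix (Fin n) (Fin n) F}
    (h1 : Amat F n * X = 0) (h2 : X * Amat F n = 0) :
    ∀ i j, ¬(i.val = 0 ∧ j.val = 0) → X i j = 0 := by
  intro i j hij
  by_cases hi : i.val = 0
  · have hj : j.val ≠ 0 := fun h => hij ⟨hi, h⟩
    have h := congrFun (congrFun h2 i) j
    rw [mul_apply] at h
    simp only [Matrix.zero_apply] at h
    rw [Finset.sum_congr rfl (fun t _ => show X i t * Amat F n t j =
        if t = j then X i j else 0 by
      by_cases ht : t = j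
      · subst ht; simp [Amat_apply, hj]
      · simp [Amat_apply, ht])] at h
    simpa [Finset.sum_ite_eq'] using h
  · have h := congrFun (congrFun h1 i) j
    rw [mul_apply] at h
    simp only [Matrix.zero_apply] at h
    rw [Finset.sum_congr rfl (fun t _ => show Amat F n i t * X t j =
        if t = i then X i j else 0 by
      by_cases ht : t = i
      · subst ht; simp [Amat_apply, hi]
      · have : ¬(i = t) := fun he => ht he.symm
        simp [Amat_apply, this, ht])] at h
    simpa [Finset.sum_ite_eq'] using h

lemma clsB (hn : 3 ≤ n) {X : Matrix (Fin n) (Fin n) F}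
    (h1 : X * Bmat F n = 0) (h2 : Bmat F n * X = 0) :
    (∀ i j, ¬(j.val = n - 1 ∧ (i.val = 0 ∨ i.val = n - 1)) → X i j = 0) ∧
      X ⟨0, by omega⟩ ⟨n - 1, by omega⟩ + X ⟨n - 1, by omega⟩ ⟨n - 1, by omega⟩ = 0 := by
  have hcol : ∀ i j : Fin n, j.val ≠ n - 1 → X i j = 0 := by
    intro i j hj
    have h := congrFun (congrFun h1 i) j
    rw [mul_apply] at h
    simp only [Matrix.zero_apply] at h
    rw [Finset.sum_congr rfl (fun t _ => show X i t * Bmat F n t j =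
        if t = j then X i j else 0 by
      by_cases ht : t = j
      · subst ht; simp [Bmat_apply, hj]
      · have h2' : ¬(t.val = 0 ∧ j.val = n - 1) := fun hc => hj hc.2
        simp [Bmat_apply, ht, h2'])] at h
    simpa [Finset.sum_ite_eq'] using h
  have hrow : ∀ i j : Fin n, i.val ≠ 0 → i.val ≠ n - 1 → X i j = 0 := by
    intro i j hi0 hil
    have h := congrFun (congrFun h2 i) j
    rw [mul_apply] at h
    simp only [Matrix.zero_apply] at h
    rw [Finset.sum_congr rfl (fun t _ => show Bmat F n i t * X t j =
        if t = i then X i j else 0 by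
      by_cases ht : t = i
      · subst ht; simp [Bmat_apply, hil]
      · have hit : ¬(i = t) := fun he => ht he.symm
        simp [Bmat_apply, hit, hi0, ht])] at h
    simpa [Finset.sum_ite_eq'] using h
  constructor
  · intro i j hij
    by_cases hj : j.val = n - 1
    · have hi : i.val ≠ 0 ∧ i.val ≠ n - 1 := by
        constructor <;> intro h <;> exact hij ⟨hj, by tauto⟩
      exact hrow i j hi.1 hi.2
    · exact hcol i j hj
  · have h0l : (0:ℕ) ≠ n - 1 := by omega
    have h0lFin : ¬((⟨0, by omega⟩ : Fin n) = ⟨n - 1, by omega⟩) := by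
      simp [Fin.ext_iff]; omega
    have hl0Fin : ¬((⟨n - 1, by omega⟩ : Fin n) = ⟨0, by omega⟩) := by
      simp [Fin.ext_iff]; omega
    have h := congrFun (congrFun h2 ⟨0, by omega⟩) ⟨n - 1, by omega⟩
    rw [mul_apply] at h
    simp only [Matrix.zero_apply] at h
    rw [Finset.sum_congr rfl (fun t _ => show
        Bmat F n ⟨0, by omega⟩ t * X t ⟨n - 1, by omega⟩ =
        (if t = (⟨0, by omega⟩ : Fin n) then X ⟨0, by omega⟩ ⟨n - 1, by omega⟩ else 0) +
        (if t = (⟨n - 1, by omega⟩ : Fin n) then X ⟨n - 1, by omega⟩ ⟨n - 1, by omega⟩ else 0) by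
      by_cases ht0 : t = (⟨0, by omega⟩ : Fin n)
      · subst ht0
        simp [Bmat_apply, h0l, h0lFin]
      · by_cases htl : t = (⟨n - 1, by omega⟩ : Fin n)
        · subst htl
          simp [Bmat_apply, hl0Fin]
        · have h1' : ¬((⟨0, by omega⟩ : Fin n) = t) := fun he => ht0 he.symm
          have h2' : t.val ≠ n - 1 := by
            intro hc; exact htl (Fin.ext hc)
          simp [Bmat_apply, h1', h2', ht0, htl])] at h
    rw [Finset.sum_add_distrib] at h
    simpa [Finset.sum_ite_eq'] using h

lemma walk3 {V : Type*} {G : SimpleGraph V} {a b : V} (p : G.Walk a b) (h : p.length ≤ 3) :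
    a = b ∨ G.Adj a b ∨ (∃ x, G.Adj a x ∧ G.Adj x b) ∨
      ∃ x y, G.Adj a x ∧ G.Adj x y ∧ G.Adj y b := by
  match p with
  | .nil => exact Or.inl rfl
  | .cons h1 .nil => exact Or.inr (Or.inl h1)
  | .cons h1 (.cons h2 .nil) => exact Or.inr (Or.inr (Or.inl ⟨_, h1, h2⟩))
  | .cons h1 (.cons h2 (.cons h3 .nil)) =>
      exact Or.inr (Or.inr (Or.inr ⟨_, _, h1, h2, h3⟩))
  | .cons _ (.cons _ (.cons _ (.cons _ q))) =>
      simp only [SimpleGraph.Walk.length_cons] at h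
      omega

lemma four_le_edist (hn : 3 ≤ n) :
    4 ≤ (orthoGraph F n).edist ⟨Amat F n, Amat_mem hn⟩ ⟨Bmat F n, Bmat_mem hn⟩ := by
  set i0 : Fin n := ⟨0, by omega⟩ with hi0
  set i1 : Fin n := ⟨1, by omega⟩ with hi1
  set lst : Fin n := ⟨n - 1, by omega⟩ with hlst
  have h0l : (0:ℕ) ≠ n - 1 := by omega
  have h1l : (1:ℕ) ≠ n - 1 := by omega
  set vA : Vx F n := ⟨Amat F n, Amat_mem hn⟩ with hvA
  set vB : Vx F n := ⟨Bmat F n, Bmat_mem hn⟩ with hvB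
  by_contra hcon
  push_neg at hcon
  have hne : (orthoGraph F n).edist vA vB ≠ ⊤ := (lt_of_lt_of_le hcon le_top).ne
  obtain ⟨p, hp⟩ := SimpleGraph.exists_walk_of_edist_ne_top hne
  have hlen : p.length ≤ 3 := by
    have hlt : (p.length : ℕ∞) < 4 := hp ▸ hcon
    have : p.length < 4 := by exact_mod_cast hlt
    omega
  rcases walk3 p hlen with heq | hadj | ⟨x, h1, h2⟩ | ⟨x, y, h1, h2, h3⟩
  · -- vA = vB
    have := congrFun (congrFun (congrArg Subtype.val heq) i0) i0
    simp [hvA, hvB, Amat_apply, Bmat_apply, hi0, h0l] at this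
  · -- adjacent
    have h := congrFun (congrFun (orthoGraph_adj.mp hadj).2.1 i1) i1
    rw [mul_apply] at h
    simp only [Matrix.zero_apply] at h
    rw [Finset.sum_congr rfl (fun t _ => show Amat F n i1 t * Bmat F n t i1 =
        if t = i1 then 1 else 0 by
      by_cases ht : t = i1
      · subst ht
        simp [Amat_apply, Bmat_apply, hi1, h1l]
      · have : ¬(i1 = t) := fun he => ht he.symm
        simp [Amat_apply, this, ht])] at h
    rw [Finset.sum_ite_eq' Finset.univ i1 (fun _ => (1:F))] at h
    simp at h
  · -- common neighbor
    obtain ⟨hcls, hrel⟩ := clsB hn (orthoGraph_adj.mp h2).2.1 (orthoGraph_adj.mp h2).2.2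
    have hx0 : x.1 = 0 := by
      ext i j
      simp only [Matrix.zero_apply]
      by_cases hij : i.val = 0 ∧ j.val = 0
      · apply hcls
        rintro ⟨hc, -⟩
        omega
      · exact clsA hn (orthoGraph_adj.mp h1).2.1 (orthoGraph_adj.mp h1).2.2 i j hij
    exact x.2.2.1 hx0
  · -- path of length 3
    obtain ⟨hcls, hrel⟩ := clsB hn (orthoGraph_adj.mp h3).2.1 (orthoGraph_adj.mp h3).2.2
    have hX00 : x.1 i0 i0 ≠ 0 := by
      intro hz
      apply x.2.2.1
      ext i j
      simp only [Matrix.zero_apply]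
      by_cases hij : i.val = 0 ∧ j.val = 0
      · have : i = i0 := Fin.ext hij.1
        have hj : j = i0 := Fin.ext hij.2
        rw [this, hj]; exact hz
      · exact clsA hn (orthoGraph_adj.mp h1).2.1 (orthoGraph_adj.mp h1).2.2 i j hij
    have hY0l : y.1 i0 lst ≠ 0 := by
      intro hz
      have hYll : y.1 lst lst = 0 := by
        have := hrel
        rw [show (⟨0, by omega⟩ : Fin n) = i0 from rfl,
          show (⟨n - 1, by omega⟩ : Fin n) = lst from rfl] at this
        rw [hz, zero_add] at this
        exact this
      apply y.2.2.1
      ext i j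
      simp only [Matrix.zero_apply]
      by_cases hij : j.val = n - 1 ∧ (i.val = 0 ∨ i.val = n - 1)
      · have hj : j = lst := Fin.ext hij.1
        rcases hij.2 with hi | hi
        · have hii : i = i0 := by apply Fin.ext; simpa using hi
          rw [hii, hj]; exact hz
        · have hii : i = lst := by apply Fin.ext; simpa using hi
          rw [hii, hj]; exact hYll
      · exact hcls i j hij
    have h := congrFun (congrFun (orthoGraph_adj.mp h2).2.1 i0) lst
    rw [mul_apply] at h
    simp only [Matrix.zero_apply] at h
    rw [Finset.sum_congr rfl (fun t _ => show x.1 i0 t * y.1 t lst =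
        if t = i0 then x.1 i0 i0 * y.1 i0 lst else 0 by
      by_cases ht : t = i0
      · subst ht; rfl
      · have htv : t.val ≠ 0 := by
          intro hc; exact ht (Fin.ext hc)
        rw [clsA hn (orthoGraph_adj.mp h1).2.1 (orthoGraph_adj.mp h1).2.2 i0 t (by rintro ⟨-, hc⟩; exact htv hc), zero_mul,
          if_neg ht])] at h
    rw [Finset.sum_ite_eq' Finset.univ i0 (fun _ => x.1 i0 i0 * y.1 i0 lst)] at h
    simp only [Finset.mem_univ, if_pos] at h
    exact (mul_ne_zero hX00 hY0l) h

end Lower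

end OrthoAux

/-- For `n ≥ 3` the diameter of the orthogonality graph `O(Tₙ)` is exactly `4`. -/
theorem stmt_9 {F : Type*} [Field F] {n : ℕ} (hn : 3 ≤ n) :
    (orthoGraph F n).ediam = 4 := by
  refine le_antisymm (OrthoAux.ediam_le_four hn) ?_
  exact le_trans (OrthoAux.four_le_edist hn) SimpleGraph.edist_le_ediam
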